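/- Let Λ = Z_p[[G]] with G ≅ Z_p^2, and let H ⊆ G be a closed subgroup with G/H ≅ Z_p; fix a topological generator h of H. If M is a finitely generated pseudo-null Λ-module, then the coinvariant module M_H = M/(h−1)M is a finitely generated torsion module over Z_p[[G/H]] ≅ Λ/(h−1). -/

import Mathlib

open MvPowerSeries


variable {p : ℕ} [Fact p.Prime]

private def deg (d : Fin 2 →₀ ℕ) : ℕ := ∑ i, d i

private lemma deg_add (a b : Fin 2 →₀ ℕ) : deg (a + b) = deg a + deg b := by
  simp [deg, Finset.sum_add_distrib]

private lemma one_le_deg {a : Fin 2 →₀ ℕ} (ha : a ≠ 0) : 1 ≤ deg a := by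
  by_contra hlt
  push_neg at hlt
  apply ha
  ext i
  have : deg a = 0 := by omega
  have := Finset.sum_eq_zero_iff.mp this i (Finset.mem_univ i)
  simpa using this

private lemma coeff_mem (n : ℕ) (f : MvPowerSeries (Fin 2) ℤ_[p])
    (hf : f ∈ (IsLocalRing.maximalIdeal (MvPowerSeries (Fin 2) ℤ_[p])) ^ n) (d : Fin 2 →₀ ℕ) :
    (MvPowerSeries.coeff d f) ∈ (IsLocalRing.maximalIdeal ℤ_[p]) ^ (n - deg d) := by
  induction n generalizing f d with
  | zero => simp
  | succ n ih =>
    rw [pow_succ'] at hf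
    induction hf using Submodule.mul_induction_on' with
    | mem_mul_mem a ha b hb =>
      rw [MvPowerSeries.coeff_mul]
      apply Ideal.sum_mem
      rintro ⟨d1, d2⟩ hd
      replace hd : d1 + d2 = d := Finset.HasAntidiagonal.mem_antidiagonal.mp hd
      simp only
      have hcb := ih b hb d2
      by_cases h1 : d1 = 0
      · subst h1
        have hca : (MvPowerSeries.coeff (0 : Fin 2 →₀ ℕ) a) ∈ IsLocalRing.maximalIdeal ℤ_[p] := by
          rw [IsLocalRing.mem_maximalIdeal, mem_nonunits_iff]
          intro hu
          exact mem_nonunits_iff.mp ((IsLocalRing.mem_maximalIdeal _).mp ha)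
            (isUnit_iff_constantCoeff.mpr
              (by simpa [MvPowerSeries.coeff_zero_eq_constantCoeff] using hu))
        have hdd : deg d = deg d2 := by rw [← hd, deg_add]; simp [deg]
        have hmul : (MvPowerSeries.coeff (0 : Fin 2 →₀ ℕ) a) * (MvPowerSeries.coeff d2 b)
            ∈ (IsLocalRing.maximalIdeal ℤ_[p]) ^ (1 + (n - deg d2)) := by
          rw [pow_add, pow_one]
          exact Ideal.mul_mem_mul hca hcb
        exact Ideal.pow_le_pow_right (by omega) hmul
      · have h1' : 1 ≤ deg d1 := one_le_deg h1
        have hdd : deg d = deg d1 + deg d2 := by rw [← hd, deg_add]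
        exact Ideal.mul_mem_left _ _ (Ideal.pow_le_pow_right (by omega) hcb)
    | add x hx y hy ihx ihy =>
      rw [map_add]
      exact Ideal.add_mem _ ihx ihy


private lemma eq_zero_of_mem_pow {p : ℕ} [Fact p.Prime]
    (π : MvPowerSeries (Fin 2) ℤ_[p]) (hπ : ¬ IsUnit π)
    (x : MvPowerSeries (Fin 2) ℤ_[p]) (hx : ∀ n : ℕ, x ∈ Ideal.span {π ^ n}) : x = 0 := by
  have hπm : π ∈ IsLocalRing.maximalIdeal (MvPowerSeries (Fin 2) ℤ_[p]) := hπ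
  have hJ : ⨅ i : ℕ, (IsLocalRing.maximalIdeal ℤ_[p]) ^ i = ⊥ :=
    Ideal.iInf_pow_eq_bot_of_isLocalRing _ (Ideal.IsMaximal.ne_top inferInstance)
  ext d
  rw [map_zero]
  have hmem : ∀ k : ℕ, (MvPowerSeries.coeff d x) ∈ (IsLocalRing.maximalIdeal ℤ_[p]) ^ k := by
    intro k
    have hxm : x ∈ (IsLocalRing.maximalIdeal (MvPowerSeries (Fin 2) ℤ_[p])) ^ (k + deg d) := by
      refine Ideal.span_le.mpr ?_ (hx (k + deg d))
      simpa using Ideal.pow_mem_pow hπm (k + deg d)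
    have := coeff_mem (k + deg d) x hxm d
    simpa using this
  have : (MvPowerSeries.coeff d x) ∈ ⨅ i : ℕ, (IsLocalRing.maximalIdeal ℤ_[p]) ^ i :=
    Submodule.mem_iInf _ |>.mpr hmem
  rw [hJ] at this
  exact this


/-- A module `M` over a commutative ring `Λ` is *pseudo-null* if its localization at every
prime ideal of height `≤ 1` vanishes. -/
def IsPseudoNull (Λ : Type*) [CommRing Λ] (M : Type*) [AddCommGroup M] [Module Λ M] :
    Prop :=
  ∀ P : Ideal Λ, ∀ hP : P.IsPrime,
    (¬ ∃ Q Q' : Ideal Λ, Q.IsPrime ∧ Q'.IsPrime ∧ Q' < Q ∧ Q < P) →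
    haveI := hP
    Subsingleton (LocalizedModule P.primeCompl M)

/-- Let `Λ = ℤ_p[[G]]` with `G ≅ ℤ_p²` — realized, via the standard
isomorphism `ℤ_p[[G]] ≅ ℤ_p[[S,T]]`, as the power series ring in two variables over
`ℤ_p`, with the group `G = ℤ_p × ℤ_p` embedded in `Λˣ` via `e` — and let `H ⊆ G` be a
closed subgroup with `G/H ≅ ℤ_p`, with fixed topological generator `h`.  The element
`e(h) - 1` generates a height-one prime ideal with `Λ/(e(h)-1) ≅ ℤ_p[[G/H]]`.  If `M` is
a finitely generated pseudo-null `Λ`-module, then the coinvariant module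
`M_H = M/(e(h)-1)M` is a finitely generated torsion module over
`ℤ_p[[G/H]] ≅ Λ/(e(h)-1)`: torsion means every element is killed by a nonzero element,
i.e. by the class of some `a ∉ (e(h)-1)`. -/
theorem statement10 (p : ℕ) [Fact p.Prime]
    (e : Multiplicative (ℤ_[p] × ℤ_[p]) →* (MvPowerSeries (Fin 2) ℤ_[p])ˣ)
    (H : AddSubgroup (ℤ_[p] × ℤ_[p]))
    (hHclosed : IsClosed (H : Set (ℤ_[p] × ℤ_[p])))
    (hGH : Nonempty (((ℤ_[p] × ℤ_[p]) ⧸ H) ≃+ ℤ_[p]))  -- `G/H ≅ ℤ_p`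
    (h : ℤ_[p] × ℤ_[p])
    (hgen : (AddSubgroup.zmultiples h).topologicalClosure = H)  -- `h` topologically generates `H`
    (hprime : Prime ((e (Multiplicative.ofAdd h) : MvPowerSeries (Fin 2) ℤ_[p]) - 1))
    (M : Type*) [AddCommGroup M] [Module (MvPowerSeries (Fin 2) ℤ_[p]) M]
    [Module.Finite (MvPowerSeries (Fin 2) ℤ_[p]) M]
    (hM : IsPseudoNull (MvPowerSeries (Fin 2) ℤ_[p]) M) :
    Module.Finite (MvPowerSeries (Fin 2) ℤ_[p])
      (M ⧸ (Ideal.span {(e (Multiplicative.ofAdd h) : MvPowerSeries (Fin 2) ℤ_[p]) - 1} • ⊤ :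
        Submodule (MvPowerSeries (Fin 2) ℤ_[p]) M)) ∧
    ∀ m : M ⧸ (Ideal.span {(e (Multiplicative.ofAdd h) : MvPowerSeries (Fin 2) ℤ_[p]) - 1} • ⊤ :
        Submodule (MvPowerSeries (Fin 2) ℤ_[p]) M),
      ∃ a : MvPowerSeries (Fin 2) ℤ_[p],
        a ∉ Ideal.span {(e (Multiplicative.ofAdd h) : MvPowerSeries (Fin 2) ℤ_[p]) - 1} ∧
        a • m = 0 := by

  classical
  set π := ((e (Multiplicative.ofAdd h) : MvPowerSeries (Fin 2) ℤ_[p]) - 1) with hπdef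
  set P := Ideal.span {π} with hPdef
  have hP : P.IsPrime := (Ideal.span_singleton_prime hprime.ne_zero).mpr hprime
  have hht : ¬ ∃ Q Q' : Ideal (MvPowerSeries (Fin 2) ℤ_[p]),
      Q.IsPrime ∧ Q'.IsPrime ∧ Q' < Q ∧ Q < P := by
    rintro ⟨Q, Q', hQ, hQ', hlt1, hlt2⟩
    have hπQ : π ∉ Q := by
      intro hmem
      have : P ≤ Q := Ideal.span_le.mpr (by simpa using hmem)
      exact absurd hlt2 (not_lt_of_ge this)
    have Qle : ∀ n : ℕ, Q ≤ Ideal.span {π ^ n} := by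
      intro n
      induction n with
      | zero => simp
      | succ n ihn =>
        intro x hx
        obtain ⟨y, hy⟩ := Ideal.mem_span_singleton.mp (ihn hx)
        have hπnQ : π ^ n ∉ Q := fun hm => hπQ (hQ.mem_of_pow_mem n hm)
        have hyQ : y ∈ Q := ((hQ.mem_or_mem (hy ▸ hx)).resolve_left hπnQ)
        obtain ⟨z, hz⟩ := Ideal.mem_span_singleton.mp (hlt2.le hyQ)
        exact Ideal.mem_span_singleton.mpr ⟨z, by rw [hy, hz, pow_succ]; ring⟩
    have hQbot : Q = ⊥ := by
      rw [Submodule.eq_bot_iff]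
      intro x hx
      exact eq_zero_of_mem_pow π hprime.not_unit x fun n => Qle n hx
    rw [hQbot] at hlt1
    exact not_lt_bot hlt1
  haveI hsub : Subsingleton (LocalizedModule P.primeCompl M) := hM P hP hht
  constructor
  · infer_instance
  · intro m
    obtain ⟨x, rfl⟩ := Submodule.Quotient.mk_surjective _ m
    have hmk : (LocalizedModule.mk x (1 : P.primeCompl) : LocalizedModule P.primeCompl M)
        = LocalizedModule.mk 0 1 := Subsingleton.elim _ _
    rw [LocalizedModule.mk_eq] at hmk
    obtain ⟨u, hu⟩ := hmk
    simp only [one_smul, smul_zero] at hu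
    refine ⟨(u : MvPowerSeries (Fin 2) ℤ_[p]), u.2, ?_⟩
    rw [← Submodule.Quotient.mk_smul]
    have : (u : MvPowerSeries (Fin 2) ℤ_[p]) • x = 0 := hu
    rw [this]
    rfl
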